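/- There exist unit vectors u₀, u₁, u₂, u₃, u₄ and a unit vector ψ in the 3-dimensional real Euclidean space such that ⟨u_i, u_{i+1 mod 5}⟩ = 0 for all i ∈ ℤ/5ℤ and Σ_{i=0}^{4} ⟨ψ, u_i⟩² = √5. Consequently the Lovász number of the 5-cycle satisfies ϑ(C₅) ≥ √5. -/

import Mathlib

private noncomputable def vec (x y z : ℝ) : EuclideanSpace ℝ (Fin 3) :=
  (WithLp.equiv 2 (Fin 3 → ℝ)).symm ![x, y, z]

private lemma inner3 (x₁ y₁ z₁ x₂ y₂ z₂ : ℝ) :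
    (inner ℝ (vec x₁ y₁ z₁) (vec x₂ y₂ z₂) : ℝ) = x₁ * x₂ + y₁ * y₂ + z₁ * z₂ := by
  simp [vec, PiLp.inner_apply, RCLike.inner_apply, Fin.sum_univ_three]
  ring

private lemma norm3 (x y z : ℝ) (hxyz : x ^ 2 + y ^ 2 + z ^ 2 = 1) :
    ‖vec x y z‖ = 1 := by
  rw [EuclideanSpace.norm_eq]
  simp only [vec, WithLp.equiv_symm_apply, PiLp.toLp_apply, WithLp.ofLp_toLp, Fin.sum_univ_three, Matrix.cons_val_zero,
    Matrix.cons_val_one, Matrix.head_cons, Matrix.cons_val_two, Matrix.tail_cons,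
    Real.norm_eq_abs, sq_abs]
  rw [hxyz, Real.sqrt_one]

/-- The Lovász umbrella: there exist unit vectors `u₀, …, u₄` in `ℝ³` with consecutive
(mod 5) vectors orthogonal, and a unit handle `ψ`, such that `Σ_i ⟨ψ, u i⟩² = √5`.
Consequently the Lovász number of the 5-cycle satisfies `ϑ(C₅) ≥ √5`. -/
theorem lovasz_umbrella_C5 :
    ∃ (u : ZMod 5 → EuclideanSpace ℝ (Fin 3)) (ψ : EuclideanSpace ℝ (Fin 3)),
      (∀ i, ‖u i‖ = 1) ∧ ‖ψ‖ = 1 ∧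
      (∀ i, (inner ℝ (u i) (u (i + 1)) : ℝ) = 0) ∧
      ∑ i, (inner ℝ ψ (u i) : ℝ) ^ 2 = Real.sqrt 5 := by
  set S : ℝ := Real.sqrt 5 with hSdef
  have hS2 : S ^ 2 = 5 := Real.sq_sqrt (by norm_num)
  have hSpos : 0 < S := Real.sqrt_pos.mpr (by norm_num)
  have hSle : S ≤ 5 := by nlinarith
  set h : ℝ := Real.sqrt (S / 5) with hdef
  have hh2 : h ^ 2 = S / 5 := Real.sq_sqrt (by positivity)
  set r : ℝ := Real.sqrt (1 - S / 5) with rdef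
  have hr2 : r ^ 2 = 1 - S / 5 := Real.sq_sqrt (by linarith)
  set a : ℝ := Real.sqrt (10 - 2 * S) / 4 with adef
  set b : ℝ := Real.sqrt (10 + 2 * S) / 4 with bdef
  have ha2 : a ^ 2 = (10 - 2 * S) / 16 := by
    rw [adef, div_pow, Real.sq_sqrt (by linarith)]; norm_num
  have hb2 : b ^ 2 = (10 + 2 * S) / 16 := by
    rw [bdef, div_pow, Real.sq_sqrt (by linarith)]; norm_num
  have hab : a * b = S / 4 := by
    rw [adef, bdef, div_mul_div_comm, ← Real.sqrt_mul (by linarith)]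
    rw [show (10 - 2 * S) * (10 + 2 * S) = (4 * S) ^ 2 by linear_combination (-20 : ℝ) * hS2,
      Real.sqrt_sq (by positivity)]
    ring
  clear_value S h r a b
  refine ⟨![vec r 0 h, vec (r * (-(1 + S) / 4)) (r * a) h, vec (r * ((S - 1) / 4)) (-(r * b)) h,
      vec (r * ((S - 1) / 4)) (r * b) h, vec (r * (-(1 + S) / 4)) (-(r * a)) h],
      vec 0 0 1, ?_, ?_, ?_, ?_⟩
  · have n0 : ‖vec r 0 h‖ = 1 := norm3 _ _ _ (by linear_combination hr2 + hh2)
    have n1 : ‖vec (r * (-(1 + S) / 4)) (r * a) h‖ = 1 := norm3 _ _ _ (by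
      linear_combination ((1 + S) ^ 2 / 16 + (10 - 2 * S) / 16) * hr2 + r ^ 2 * ha2 + hh2
        + (5 - S) / 80 * hS2)
    have n2 : ‖vec (r * ((S - 1) / 4)) (-(r * b)) h‖ = 1 := norm3 _ _ _ (by
      linear_combination ((S - 1) ^ 2 / 16 + (10 + 2 * S) / 16) * hr2 + r ^ 2 * hb2 + hh2
        + (5 - S) / 80 * hS2)
    have n3 : ‖vec (r * ((S - 1) / 4)) (r * b) h‖ = 1 := norm3 _ _ _ (by
      linear_combination ((S - 1) ^ 2 / 16 + (10 + 2 * S) / 16) * hr2 + r ^ 2 * hb2 + hh2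
        + (5 - S) / 80 * hS2)
    have n4 : ‖vec (r * (-(1 + S) / 4)) (-(r * a)) h‖ = 1 := norm3 _ _ _ (by
      linear_combination ((1 + S) ^ 2 / 16 + (10 - 2 * S) / 16) * hr2 + r ^ 2 * ha2 + hh2
        + (5 - S) / 80 * hS2)
    intro i
    fin_cases i
    exacts [n0, n1, n2, n3, n4]
  · exact norm3 0 0 1 (by norm_num)
  · have o01 : (inner ℝ (vec r 0 h) (vec (r * (-(1 + S) / 4)) (r * a) h) : ℝ) = 0 := by
      rw [inner3]; linear_combination (-(1 + S) / 4) * hr2 + hh2 + hS2 / 20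
    have o12 : (inner ℝ (vec (r * (-(1 + S) / 4)) (r * a) h)
        (vec (r * ((S - 1) / 4)) (-(r * b)) h) : ℝ) = 0 := by
      rw [inner3]
      linear_combination ((1 - S ^ 2) / 16 - S / 4) * hr2 - r ^ 2 * hab + hh2
        + (S - 1) / 80 * hS2
    have o23 : (inner ℝ (vec (r * ((S - 1) / 4)) (-(r * b)) h)
        (vec (r * ((S - 1) / 4)) (r * b) h) : ℝ) = 0 := by
      rw [inner3]
      linear_combination ((S ^ 2 - 4 * S - 9) / 16) * hr2 - r ^ 2 * hb2 + hh2
        + (9 - S) / 80 * hS2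
    have o34 : (inner ℝ (vec (r * ((S - 1) / 4)) (r * b) h)
        (vec (r * (-(1 + S) / 4)) (-(r * a)) h) : ℝ) = 0 := by
      rw [inner3]
      linear_combination ((1 - S ^ 2) / 16 - S / 4) * hr2 - r ^ 2 * hab + hh2
        + (S - 1) / 80 * hS2
    have o40 : (inner ℝ (vec (r * (-(1 + S) / 4)) (-(r * a)) h) (vec r 0 h) : ℝ) = 0 := by
      rw [inner3]; linear_combination (-(1 + S) / 4) * hr2 + hh2 + hS2 / 20
    intro i
    fin_cases i
    exacts [o01, o12, o23, o34, o40]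
  · show ∑ i : Fin 5, _ = S
    rw [Fin.sum_univ_five]
    simp only [Matrix.cons_val_zero, Matrix.cons_val_one, Matrix.cons_val_two,
      Matrix.cons_val_three, Matrix.cons_val_four, Matrix.head_cons, Matrix.tail_cons]
    have e0 : (inner ℝ (vec 0 0 1) (vec r 0 h) : ℝ) = h := by rw [inner3]; ring
    have e1 : (inner ℝ (vec 0 0 1) (vec (r * (-(1 + S) / 4)) (r * a) h) : ℝ) = h := by
      rw [inner3]; ring
    have e2 : (inner ℝ (vec 0 0 1) (vec (r * ((S - 1) / 4)) (-(r * b)) h) : ℝ) = h := by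
      rw [inner3]; ring
    have e3 : (inner ℝ (vec 0 0 1) (vec (r * ((S - 1) / 4)) (r * b) h) : ℝ) = h := by
      rw [inner3]; ring
    have e4 : (inner ℝ (vec 0 0 1) (vec (r * (-(1 + S) / 4)) (-(r * a)) h) : ℝ) = h := by
      rw [inner3]; ring
    calc _ = h ^ 2 + h ^ 2 + h ^ 2 + h ^ 2 + h ^ 2 := by rw [e0, e1, e2, e3, e4]
    _ = S := by linear_combination 5 * hh2
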